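/- For all trajectories u, v, t on 𝕂, every c > 0 and every r ∈ [1,∞): writing D_{ut} = D_u ∪ D_t and D_{uv} = D_u ∪ D_v, one has ((Σ_{k ∈ D_{ut}} e_{u,v}(k)^r) / |D_{ut}|)^{1/r} ≤ ((Σ_{k ∈ D_{uv}} e_{u,v}(k)^r) / |D_{uv}|)^{1/r}, where an average over an empty index set is interpreted as 0. -/

import Mathlib

open scoped BigOperators

/-- A trajectory on the time window `{1,…,K}` (modeled as `Fin K`): a domain together
with a state map (values outside the domain are irrelevant). -/
structure Traj (K : ℕ) (X : Type*) where
  dom : Finset (Fin K)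
  toFun : Fin K → X

/-- Per-time cost `e_{u,v}(k)` with base metric cut off at `c`. -/
noncomputable def ecost {K : ℕ} {X : Type*} [MetricSpace X] (c : ℝ) (u v : Traj K X)
    (k : Fin K) : ℝ :=
  if k ∈ u.dom ∩ v.dom then min (dist (u.toFun k) (v.toFun k)) c
  else if k ∈ u.dom ∪ v.dom then c
  else 0

/-- Lemma A1: averaging the per-time cost `e_{u,v}` over `D_u ∪ D_t` gives a value no
larger than averaging it over `D_u ∪ D_v` (an average over an empty index set is `0`,
which is automatic here from the division-by-zero convention). -/
theorem ospa_trajectory_average_bound {K : ℕ} {X : Type*} [MetricSpace X] (hK : 1 ≤ K)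
    {c r : ℝ} (hc : 0 < c) (hr : 1 ≤ r) (u v t : Traj K X) :
    ((∑ k ∈ u.dom ∪ t.dom, ecost c u v k ^ r) / ((u.dom ∪ t.dom).card : ℝ)) ^ (1 / r)
      ≤ ((∑ k ∈ u.dom ∪ v.dom, ecost c u v k ^ r) / ((u.dom ∪ v.dom).card : ℝ)) ^ (1 / r) := by
  classical
  have hr0 : (0:ℝ) < r := lt_of_lt_of_le one_pos hr
  set A := u.dom ∪ t.dom with hA
  set B := u.dom ∪ v.dom with hB
  set f : Fin K → ℝ := fun k => ecost c u v k ^ r with hf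
  have hecost_nonneg : ∀ k, 0 ≤ ecost c u v k := by
    intro k
    unfold ecost
    split_ifs
    · exact le_min dist_nonneg hc.le
    · exact hc.le
    · exact le_rfl
  have hf_nonneg : ∀ k, 0 ≤ f k := fun k => Real.rpow_nonneg (hecost_nonneg k) r
  have hecost_le : ∀ k, ecost c u v k ≤ c := by
    intro k; unfold ecost; split_ifs
    · exact min_le_right _ _
    · exact le_rfl
    · exact hc.le
  have hf_le : ∀ k, f k ≤ c ^ r := fun k =>
    Real.rpow_le_rpow (hecost_nonneg k) (hecost_le k) hr0.le
  have hcr : (0:ℝ) ≤ c ^ r := Real.rpow_nonneg hc.le r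
  have hzero : ∀ k, k ∉ B → f k = 0 := by
    intro k hk
    have h1 : ecost c u v k = 0 := by
      unfold ecost
      rw [if_neg, if_neg hk]
      intro h
      exact hk (Finset.mem_union_left _ (Finset.mem_of_mem_inter_left h))
    simp only [hf, h1]
    exact Real.zero_rpow hr0.ne'
  have hBA : ∀ k ∈ B \ A, f k = c ^ r := by
    intro k hk
    simp only [Finset.mem_sdiff, hB, hA, Finset.mem_union] at hk
    obtain ⟨hkB, hkA⟩ := hk
    have hku : k ∉ u.dom := fun h => hkA (Or.inl h)
    have hkv : k ∈ v.dom := hkB.resolve_left hku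
    have h1 : ecost c u v k = c := by
      unfold ecost
      rw [if_neg, if_pos (Finset.mem_union_right _ hkv)]
      intro h; exact hku (Finset.mem_of_mem_inter_left h)
    simp only [hf, h1]
  have hsumA : ∑ k ∈ A, f k = ∑ k ∈ A ∩ B, f k := by
    refine (Finset.sum_subset Finset.inter_subset_left ?_).symm
    intro k hkA hk
    exact hzero k (fun hkB => hk (Finset.mem_inter.mpr ⟨hkA, hkB⟩))
  have hdisj : Disjoint (A ∩ B) (B \ A) := by
    rw [Finset.disjoint_left]
    intro k hk hk'
    exact (Finset.mem_sdiff.mp hk').2 (Finset.mem_of_mem_inter_left hk)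
  have hBsplit : B = (A ∩ B) ∪ (B \ A) := by
    ext k
    simp only [Finset.mem_union, Finset.mem_inter, Finset.mem_sdiff]
    tauto
  have hsumB : ∑ k ∈ B, f k = (∑ k ∈ A ∩ B, f k) + ((B \ A).card : ℝ) * c ^ r := by
    conv_lhs => rw [hBsplit]
    rw [Finset.sum_union hdisj]
    congr 1
    rw [Finset.sum_congr rfl hBA, Finset.sum_const, nsmul_eq_mul]
  set S := ∑ k ∈ A ∩ B, f k with hS
  have hS_nonneg : 0 ≤ S := Finset.sum_nonneg fun k _ => hf_nonneg k
  have hS_le : S ≤ ((A ∩ B).card : ℝ) * c ^ r := by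
    calc S ≤ ∑ _k ∈ A ∩ B, c ^ r := Finset.sum_le_sum fun k _ => hf_le k
    _ = ((A ∩ B).card : ℝ) * c ^ r := by rw [Finset.sum_const, nsmul_eq_mul]
  have hcardB : (B.card : ℝ) = ((A ∩ B).card : ℝ) + ((B \ A).card : ℝ) := by
    conv_lhs => rw [hBsplit]
    rw [Finset.card_union_of_disjoint hdisj]; push_cast; ring
  have hp_le_n : ((A ∩ B).card : ℝ) ≤ (A.card : ℝ) := by
    exact_mod_cast Finset.card_le_card Finset.inter_subset_left
  have key : (∑ k ∈ A, f k) / (A.card : ℝ) ≤ (∑ k ∈ B, f k) / (B.card : ℝ) := by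
    rw [hsumA, hsumB, hcardB]
    set p := ((A ∩ B).card : ℝ) with hp
    set q := ((B \ A).card : ℝ) with hq
    set n := ((A).card : ℝ) with hn
    have hp0 : 0 ≤ p := Nat.cast_nonneg _
    have hq0 : 0 ≤ q := Nat.cast_nonneg _
    rcases eq_or_lt_of_le hp0 with hp' | hp'
    · have hScard : S = 0 := by
        have : (A ∩ B).card = 0 := by rw [hp] at hp'; exact_mod_cast hp'.symm
        rw [hS, Finset.card_eq_zero.mp this, Finset.sum_empty]
      rw [hScard]
      simp only [zero_div, zero_add]
      exact div_nonneg (mul_nonneg hq0 hcr) (add_nonneg hp0 hq0)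
    · have hn0 : 0 < n := lt_of_lt_of_le hp' hp_le_n
      have hpq0 : 0 < p + q := by linarith
      rw [div_le_div_iff₀ hn0 hpq0]
      nlinarith [mul_nonneg hq0 hcr, mul_nonneg hS_nonneg hq0]
  refine Real.rpow_le_rpow ?_ key (by positivity)
  exact div_nonneg (Finset.sum_nonneg fun k _ => hf_nonneg k) (Nat.cast_nonneg _)
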